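/- Let (v_k)_{k∈ℕ} be a block sequence of (e_n) which is semi-normalized, i.e. there exist constants 0 < c ≤ C with c ≤ ‖v_k‖_E ≤ C for every k, and which satisfies ‖Q_X(v_k)‖_X ≤ 2^{-k} for every k ∈ ℕ. Then (v_k) is equivalent to the standard unit vector basis of c₀ (with respect to the norm ‖·‖_E). -/

import Mathlib

open Filter

/-- In the space `E_X` (the completion of `c₀₀` under
`‖z‖_E = sup_m ‖∑_{n=0}^m z(n)·x_n‖_X`, with dense image `ι` of `c₀₀`, unit
vectors `e n = ι (single n 1)` and quotient operator `Q` with `Q (e n) = x n`):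
every semi-normalized block sequence `(v k)` of `(e n)` with
`‖Q (v k)‖ ≤ 2⁻ᵏ` is equivalent to the standard unit vector basis of `c₀`. -/
theorem stmt_2 {X : Type*} [NormedAddCommGroup X] [NormedSpace ℝ X] [CompleteSpace X]
    (x : ℕ → X) (hx1 : ∀ n, ‖x n‖ = 1)
    (hxd : ∀ y : X, ‖y‖ = 1 → ∀ ε : ℝ, 0 < ε → ∃ n, ‖y - x n‖ < ε)
    {E : Type*} [NormedAddCommGroup E] [NormedSpace ℝ E] [CompleteSpace E]
    (ι : (ℕ →₀ ℝ) →ₗ[ℝ] E) (hιd : DenseRange ι)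
    (hnorm : ∀ z : ℕ →₀ ℝ,
      ‖ι z‖ = ⨆ m : ℕ, ‖∑ n ∈ Finset.range (m + 1), z n • x n‖)
    (Q : E →L[ℝ] X) (hQ : ∀ n, Q (ι (Finsupp.single n 1)) = x n)
    -- `(v k)` is a block sequence of `(e n)`
    (v : ℕ → (ℕ →₀ ℝ)) (hv0 : ∀ k, v k ≠ 0)
    (hblock : ∀ k, ∀ i ∈ (v k).support, ∀ j ∈ (v (k + 1)).support, i < j)
    -- semi-normalized
    (c C : ℝ) (hc : 0 < c) (hcC : c ≤ C)
    (hsn : ∀ k, c ≤ ‖ι (v k)‖ ∧ ‖ι (v k)‖ ≤ C)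
    -- small images under `Q`
    (hQv : ∀ k, ‖Q (ι (v k))‖ ≤ ((2 : ℝ) ^ k)⁻¹) :
    -- `(v k)` is equivalent to the unit vector basis of `c₀`
    ∃ M : ℝ, 1 ≤ M ∧ ∀ (j : ℕ) (a : ℕ → ℝ),
      M⁻¹ * (Finset.range (j + 1)).sup' Finset.nonempty_range_add_one (fun k => |a k|)
          ≤ ‖∑ k ∈ Finset.range (j + 1), a k • ι (v k)‖ ∧
      ‖∑ k ∈ Finset.range (j + 1), a k • ι (v k)‖
          ≤ M * (Finset.range (j + 1)).sup' Finset.nonempty_range_add_one (fun k => |a k|) := by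
  classical
  set P : (ℕ →₀ ℝ) → ℕ → X := fun z m => ∑ n ∈ Finset.range (m + 1), z n • x n with hPdef
  have hnorm' : ∀ z : ℕ →₀ ℝ, ‖ι z‖ = ⨆ m : ℕ, ‖P z m‖ := hnorm
  have hstab : ∀ (z : ℕ →₀ ℝ) (N m : ℕ), (∀ n ∈ z.support, n ≤ N) → N ≤ m →
      P z m = P z N := by
    intro z N m hN hNm
    refine (Finset.sum_subset (Finset.range_subset_range.mpr (by omega)) ?_).symm
    intro n hn hn'
    have hz : z n = 0 := by
      by_contra h
      exact hn' (Finset.mem_range.mpr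
        (Nat.lt_succ_of_le (hN n (Finsupp.mem_support_iff.mpr h))))
    simp [hz]
  have hbdd : ∀ z : ℕ →₀ ℝ, BddAbove (Set.range fun m => ‖P z m‖) := by
    intro z
    set N := z.support.sup id with hNdef
    have hsupp : ∀ n ∈ z.support, n ≤ N := fun n hn => Finset.le_sup (f := id) hn
    refine ⟨(Finset.range (N + 1)).sup' Finset.nonempty_range_add_one fun m => ‖P z m‖, ?_⟩
    rintro _ ⟨m, rfl⟩
    dsimp only
    rcases le_or_gt m N with h | h
    · exact Finset.le_sup' (fun m => ‖P z m‖) (Finset.mem_range.mpr (Nat.lt_succ_of_le h))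
    · rw [hstab z N m hsupp h.le]
      exact Finset.le_sup' (fun m => ‖P z m‖) (Finset.mem_range.mpr (Nat.lt_succ_self N))
  have hPle : ∀ (z : ℕ →₀ ℝ) (m : ℕ), ‖P z m‖ ≤ ‖ι z‖ := by
    intro z m
    rw [hnorm' z]
    exact le_ciSup (hbdd z) m
  have hιle : ∀ (z : ℕ →₀ ℝ) (b : ℝ), (∀ m, ‖P z m‖ ≤ b) → ‖ι z‖ ≤ b := by
    intro z b hb
    rw [hnorm' z]; exact ciSup_le hb
  have hQsupp : ∀ z : ℕ →₀ ℝ, Q (ι z) = ∑ n ∈ z.support, z n • x n := by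
    intro z
    conv_lhs => rw [← Finsupp.sum_single z]
    rw [Finsupp.sum, map_sum, map_sum]
    refine Finset.sum_congr rfl fun n hn => ?_
    rw [← Finsupp.smul_single_one, map_smul, map_smul, hQ]
  have hQP : ∀ (z : ℕ →₀ ℝ) (N : ℕ), (∀ n ∈ z.support, n ≤ N) → Q (ι z) = P z N := by
    intro z N hN
    rw [hQsupp]
    exact Finset.sum_subset
      (fun n hn => Finset.mem_range.mpr (Nat.lt_succ_of_le (hN n hn)))
      (fun n _ hn => by simp [Finsupp.notMem_support_iff.mp hn])
  have hsne : ∀ k, (v k).support.Nonempty := fun k => Finsupp.support_nonempty_iff.mpr (hv0 k)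
  set lo : ℕ → ℕ := fun k => (v k).support.min' (hsne k) with hlodef
  set hi : ℕ → ℕ := fun k => (v k).support.max' (hsne k) with hhidef
  have hlohi : ∀ k, lo k ≤ hi k := fun k => Finset.min'_le _ _ (Finset.max'_mem _ _)
  have hstep : ∀ k, hi k < lo (k + 1) := fun k =>
    hblock k _ (Finset.max'_mem _ _) _ (Finset.min'_mem _ _)
  have hchain : ∀ k l, k < l → hi k < lo l := by
    intro k l hkl
    induction l with
    | zero => omega
    | succ l ih =>
      rcases Nat.lt_succ_iff_lt_or_eq.mp hkl with h | h
      · exact lt_of_lt_of_le (ih h) (le_trans (hlohi l) (le_of_lt (hstep l)))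
      · subst h; exact hstep k
  have hlomono : ∀ p q, p ≤ q → lo p ≤ lo q := by
    intro p q h
    rcases eq_or_lt_of_le h with rfl | h
    · exact le_rfl
    · exact le_of_lt (lt_of_le_of_lt (hlohi p) (hchain p q h))
  have hPzero : ∀ k m, m < lo k → P (v k) m = 0 := by
    intro k m h
    apply Finset.sum_eq_zero
    intro n hn
    have hz : v k n = 0 := by
      by_contra hcn
      have h1 : lo k ≤ n := Finset.min'_le _ _ (Finsupp.mem_support_iff.mpr hcn)
      have h2 := Finset.mem_range.mp hn
      omega
    simp [hz]
  have hPfull : ∀ k m, hi k ≤ m → P (v k) m = Q (ι (v k)) := by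
    intro k m h
    exact (hQP (v k) m fun n hn => le_trans (Finset.le_max' _ _ hn) h).symm
  have hPsum : ∀ (j m : ℕ) (a : ℕ → ℝ),
      P (∑ k ∈ Finset.range (j + 1), a k • v k) m
        = ∑ k ∈ Finset.range (j + 1), a k • P (v k) m := by
    intro j m a
    simp only [hPdef, Finsupp.finset_sum_apply, Finsupp.smul_apply, smul_eq_mul,
      Finset.smul_sum, Finset.sum_smul, smul_smul]
    exact Finset.sum_comm
  have hdecomp : ∀ (j m K : ℕ) (a : ℕ → ℝ), K ≤ j → lo K ≤ m → (K = j ∨ m < lo (K + 1)) →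
      P (∑ k ∈ Finset.range (j + 1), a k • v k) m
        = (∑ k ∈ Finset.range K, a k • Q (ι (v k))) + a K • P (v K) m := by
    intro j m K a hKj hloK hK2
    rw [hPsum]
    rw [Finset.range_eq_Ico, ← Finset.sum_Ico_consecutive _ (Nat.zero_le (K + 1)) (by omega)]
    have htail : ∑ k ∈ Finset.Ico (K + 1) (j + 1), a k • P (v k) m = 0 := by
      apply Finset.sum_eq_zero
      intro k hk
      rcases hK2 with h | h
      · subst h; simp only [Finset.mem_Ico] at hk; omega
      · rw [hPzero k m (lt_of_lt_of_le h (hlomono _ _ (Finset.mem_Ico.mp hk).1))]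
        simp
    rw [htail, add_zero, ← Finset.range_eq_Ico, Finset.sum_range_succ]
    congr 1
    refine Finset.sum_congr rfl fun k hk => ?_
    rw [hPfull k m (le_trans (hchain k K (Finset.mem_range.mp hk)).le hloK)]
  have hupper : ∀ (j : ℕ) (a : ℕ → ℝ),
      ‖ι (∑ k ∈ Finset.range (j + 1), a k • v k)‖
        ≤ (2 + C) * (Finset.range (j + 1)).sup' Finset.nonempty_range_add_one (fun k => |a k|) := by
    intro j a
    set A := (Finset.range (j + 1)).sup' Finset.nonempty_range_add_one (fun k => |a k|) with hA
    have hAk : ∀ k ≤ j, |a k| ≤ A := fun k hk =>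
      Finset.le_sup' (fun k => |a k|) (Finset.mem_range.mpr (by omega))
    have hA0 : 0 ≤ A := le_trans (abs_nonneg (a 0)) (hAk 0 (Nat.zero_le j))
    apply hιle
    intro m
    by_cases h0 : m < lo 0
    · have hz : P (∑ k ∈ Finset.range (j + 1), a k • v k) m = 0 := by
        rw [hPsum]
        apply Finset.sum_eq_zero
        intro k hk
        rw [hPzero k m (lt_of_lt_of_le h0 (hlomono 0 k (Nat.zero_le k)))]
        simp
      rw [hz, norm_zero]
      have h2C : (0:ℝ) ≤ 2 + C := by linarith
      exact mul_nonneg h2C hA0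
    · push_neg at h0
      set S := (Finset.range (j + 1)).filter (fun k => lo k ≤ m) with hS
      have hS0 : (0 : ℕ) ∈ S := by
        rw [hS]; exact Finset.mem_filter.mpr ⟨Finset.mem_range.mpr (by omega), h0⟩
      have hSne : S.Nonempty := ⟨0, hS0⟩
      set K := S.max' hSne with hK
      have hKmem : K ∈ S := Finset.max'_mem _ _
      have hKj : K ≤ j := by
        have := Finset.mem_range.mp (Finset.mem_filter.mp hKmem).1; omega
      have hloK : lo K ≤ m := (Finset.mem_filter.mp hKmem).2
      have hK2 : K = j ∨ m < lo (K + 1) := by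
        rcases eq_or_lt_of_le hKj with h | h
        · exact Or.inl h
        · right
          by_contra hcon
          push_neg at hcon
          have hmem : K + 1 ∈ S :=
            Finset.mem_filter.mpr ⟨Finset.mem_range.mpr (by omega), hcon⟩
          have := Finset.le_max' S _ hmem
          omega
      rw [hdecomp j m K a hKj hloK hK2]
      have h1 : ‖∑ k ∈ Finset.range K, a k • Q (ι (v k))‖ ≤ 2 * A := by
        calc ‖∑ k ∈ Finset.range K, a k • Q (ι (v k))‖
            ≤ ∑ k ∈ Finset.range K, ‖a k • Q (ι (v k))‖ := norm_sum_le _ _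
          _ ≤ ∑ k ∈ Finset.range K, A * (1 / 2 : ℝ) ^ k := by
              apply Finset.sum_le_sum
              intro k hk
              rw [norm_smul, Real.norm_eq_abs]
              have h2 : ‖Q (ι (v k))‖ ≤ (1 / 2 : ℝ) ^ k := by
                rw [one_div, inv_pow]; exact hQv k
              exact mul_le_mul (hAk k (by have := Finset.mem_range.mp hk; omega)) h2
                (norm_nonneg _) hA0
          _ = A * ∑ k ∈ Finset.range K, (1 / 2 : ℝ) ^ k := by rw [Finset.mul_sum]
          _ ≤ A * 2 := mul_le_mul_of_nonneg_left (sum_geometric_two_le K) hA0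
          _ = 2 * A := mul_comm _ _
      have h2 : ‖a K • P (v K) m‖ ≤ C * A := by
        rw [norm_smul, Real.norm_eq_abs]
        have h3 : ‖P (v K) m‖ ≤ C := le_trans (hPle (v K) m) (hsn K).2
        calc |a K| * ‖P (v K) m‖ ≤ A * C :=
              mul_le_mul (hAk K hKj) h3 (norm_nonneg _) hA0
          _ = C * A := mul_comm _ _
      calc ‖(∑ k ∈ Finset.range K, a k • Q (ι (v k))) + a K • P (v K) m‖
          ≤ ‖∑ k ∈ Finset.range K, a k • Q (ι (v k))‖ + ‖a K • P (v K) m‖ := norm_add_le _ _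
        _ ≤ 2 * A + C * A := add_le_add h1 h2
        _ = (2 + C) * A := by ring
  have hlower : ∀ (j : ℕ) (a : ℕ → ℝ),
      c / 4 * (Finset.range (j + 1)).sup' Finset.nonempty_range_add_one (fun k => |a k|)
        ≤ ‖ι (∑ k ∈ Finset.range (j + 1), a k • v k)‖ := by
    intro j a
    obtain ⟨k₀, hk₀mem, hk₀⟩ :=
      Finset.exists_mem_eq_sup' (Finset.nonempty_range_add_one (n := j)) (fun k => |a k|)
    rw [hk₀]
    have hk₀j : k₀ ≤ j := by have := Finset.mem_range.mp hk₀mem; omega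
    have hc2 : ∃ m, m ≤ hi k₀ ∧ c / 2 < ‖P (v k₀) m‖ := by
      by_contra hcon
      push_neg at hcon
      have hall : ∀ m, ‖P (v k₀) m‖ ≤ c / 2 := by
        intro m
        rcases le_or_gt m (hi k₀) with h | h
        · exact hcon m h
        · rw [hstab (v k₀) (hi k₀) m (fun n hn => Finset.le_max' _ _ hn) h.le]
          exact hcon (hi k₀) le_rfl
      have h1 := hιle (v k₀) (c / 2) hall
      have h2 := (hsn k₀).1
      linarith
    obtain ⟨m, hmhi, hm⟩ := hc2
    have hlom : lo k₀ ≤ m := by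
      by_contra h
      push_neg at h
      rw [hPzero k₀ m h, norm_zero] at hm
      linarith
    have hK2 : k₀ = j ∨ m < lo (k₀ + 1) := by
      rcases eq_or_lt_of_le hk₀j with h | h
      · exact Or.inl h
      · exact Or.inr (lt_of_le_of_lt hmhi (hstep k₀))
    have hdec := hdecomp j m k₀ a hk₀j hlom hK2
    have hT : ‖∑ k ∈ Finset.range k₀, a k • Q (ι (v k))‖
        ≤ ‖ι (∑ k ∈ Finset.range (j + 1), a k • v k)‖ := by
      rcases Nat.eq_zero_or_pos k₀ with h | h
      · subst h; simp [norm_nonneg]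
      · obtain ⟨p, rfl⟩ : ∃ p, k₀ = p + 1 := ⟨k₀ - 1, by omega⟩
        have hdec2 := hdecomp j (hi p) p a (by omega) (hlohi p) (Or.inr (hstep p))
        rw [hPfull p (hi p) le_rfl] at hdec2
        rw [Finset.sum_range_succ, ← hdec2]
        exact hPle _ _
    have hsmul : ‖a k₀ • P (v k₀) m‖ = |a k₀| * ‖P (v k₀) m‖ := by
      rw [norm_smul, Real.norm_eq_abs]
    have h2 : ‖a k₀ • P (v k₀) m‖
        ≤ ‖P (∑ k ∈ Finset.range (j + 1), a k • v k) m‖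
          + ‖∑ k ∈ Finset.range k₀, a k • Q (ι (v k))‖ := by
      have h1 : a k₀ • P (v k₀) m
          = P (∑ k ∈ Finset.range (j + 1), a k • v k) m
            - ∑ k ∈ Finset.range k₀, a k • Q (ι (v k)) := by
        rw [hdec]; abel
      rw [h1]; exact norm_sub_le _ _
    have h3 := hPle (∑ k ∈ Finset.range (j + 1), a k • v k) m
    have h4 : |a k₀| * (c / 2) ≤ |a k₀| * ‖P (v k₀) m‖ :=
      mul_le_mul_of_nonneg_left hm.le (abs_nonneg _)
    nlinarith [abs_nonneg (a k₀), hsmul]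
  refine ⟨max (4 / c) (2 + C), le_trans (by linarith) (le_max_right _ _), ?_⟩
  intro j a
  set M := max (4 / c) (2 + C) with hM
  have hι : ∑ k ∈ Finset.range (j + 1), a k • ι (v k)
      = ι (∑ k ∈ Finset.range (j + 1), a k • v k) := by
    rw [map_sum]
    exact Finset.sum_congr rfl fun k _ => (map_smul ι _ _).symm
  set A := (Finset.range (j + 1)).sup' Finset.nonempty_range_add_one (fun k => |a k|) with hA
  have hA0 : 0 ≤ A :=
    le_trans (abs_nonneg (a 0)) (Finset.le_sup' (fun k => |a k|) (Finset.mem_range.mpr (by omega)))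
  have hMpos : 0 < M := lt_of_lt_of_le (by positivity) (le_max_left (4 / c) (2 + C))
  constructor
  · rw [hι]
    have hl := hlower j a
    have hMc : M⁻¹ ≤ c / 4 := by
      have h1 : 4 / c ≤ M := le_max_left _ _
      have h2 : 0 < 4 / c := by positivity
      calc M⁻¹ ≤ (4 / c)⁻¹ := inv_anti₀ h2 h1
        _ = c / 4 := by rw [inv_div]
    calc M⁻¹ * A ≤ c / 4 * A := mul_le_mul_of_nonneg_right hMc hA0
      _ ≤ _ := hl
  · rw [hι]
    calc ‖ι (∑ k ∈ Finset.range (j + 1), a k • v k)‖ ≤ (2 + C) * A := hupper j a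
      _ ≤ M * A := mul_le_mul_of_nonneg_right (le_max_right _ _) hA0
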